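/- Let p_t^k(r) = ∫_{(0,∞)} (2πs)^{-k/2} exp(-r²/(2s)) dμ(s) for a finite measure μ on (0,∞). Then for all r > 0, (d/dr) p_t^k(r) = -2π r p_t^{k+2}(r), where p_t^{k+2}(r) = ∫_{(0,∞)} (2πs)^{-(k+2)/2} exp(-r²/(2s)) dμ(s). -/

import Mathlib

open MeasureTheory

/-- Key bound: `(2πs)^(-m) e^{-a/s} ≤ n! / (2πa)^m` for `0 < a`, `0 ≤ m ≤ n`, `0 < s`. -/
lemma key_rpow_exp_bound (a m : ℝ) (ha : 0 < a) (hm : 0 ≤ m) (n : ℕ) (hmn : m ≤ n)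
    (s : ℝ) (hs : 0 < s) :
    (2 * Real.pi * s) ^ (-m) * Real.exp (-(a / s)) ≤
      (n.factorial : ℝ) / (2 * Real.pi * a) ^ m := by
  have hπ : (0:ℝ) < Real.pi := Real.pi_pos
  set u := a / s with hu
  have hu0 : 0 < u := div_pos ha hs
  have hA : (0:ℝ) < 2 * Real.pi * a := by positivity
  have h1 : 2 * Real.pi * s = 2 * Real.pi * a / u := by
    rw [hu]; field_simp
  have h2 : (2 * Real.pi * s) ^ (-m) = u ^ m / (2 * Real.pi * a) ^ m := by
    rw [h1, Real.rpow_neg (by positivity), Real.div_rpow hA.le hu0.le, inv_div]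
  rw [h2, div_mul_eq_mul_div, div_le_div_iff_of_pos_right (by positivity)]
  have hfac : (1:ℝ) ≤ n.factorial := by exact_mod_cast n.factorial_pos
  rcases le_or_gt u 1 with h | h
  · calc u ^ m * Real.exp (-u) ≤ 1 * 1 := by
          apply mul_le_mul
          · exact Real.rpow_le_one hu0.le h hm
          · exact Real.exp_le_one_iff.mpr (by linarith)
          · positivity
          · norm_num
        _ ≤ n.factorial := by linarith
  · have h1u : u ^ m ≤ u ^ (n:ℝ) := Real.rpow_le_rpow_of_exponent_le h.le hmn
    have h2u : u ^ (n:ℝ) = u ^ n := Real.rpow_natCast u n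
    have h3 : u ^ n / n.factorial ≤ Real.exp u :=
      Real.pow_div_factorial_le_exp u (le_of_lt hu0) n
    have h4 : u ^ n ≤ n.factorial * Real.exp u := by
      rw [div_le_iff₀ (by positivity : (0:ℝ) < (n.factorial:ℝ))] at h3
      linarith
    calc u ^ m * Real.exp (-u) ≤ u ^ n * Real.exp (-u) := by
          rw [← h2u]; exact mul_le_mul_of_nonneg_right h1u (Real.exp_pos _).le
      _ ≤ (n.factorial * Real.exp u) * Real.exp (-u) :=
          mul_le_mul_of_nonneg_right h4 (Real.exp_pos _).le
      _ = n.factorial := by rw [mul_assoc, ← Real.exp_add]; simp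

theorem deriv_subordinated_density (k : ℕ) (hk : 1 ≤ k)
    (μ : Measure ℝ) [IsFiniteMeasure μ] (r : ℝ) (hr : 0 < r) :
    HasDerivAt (fun x : ℝ =>
        ∫ s in Set.Ioi (0 : ℝ), (2 * Real.pi * s) ^ (-(k : ℝ) / 2) *
          Real.exp (-(x ^ 2 / (2 * s))) ∂μ)
      (-(2 * Real.pi * r) *
        ∫ s in Set.Ioi (0 : ℝ), (2 * Real.pi * s) ^ (-((k : ℝ) + 2) / 2) *
          Real.exp (-(r ^ 2 / (2 * s))) ∂μ) r := by
  have hπ : (0:ℝ) < Real.pi := Real.pi_pos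
  set ν := μ.restrict (Set.Ioi (0:ℝ)) with hν
  set F : ℝ → ℝ → ℝ := fun x s =>
    (2 * Real.pi * s) ^ (-(k : ℝ) / 2) * Real.exp (-(x ^ 2 / (2 * s))) with hF
  set F' : ℝ → ℝ → ℝ := fun x s =>
    -(2 * Real.pi * x) * ((2 * Real.pi * s) ^ (-((k : ℝ) + 2) / 2) *
      Real.exp (-(x ^ 2 / (2 * s)))) with hF'
  have hmemae : ∀ᵐ s ∂ν, s ∈ Set.Ioi (0:ℝ) := ae_restrict_mem measurableSet_Ioi
  have hFmeas : ∀ x : ℝ, AEStronglyMeasurable (F x) ν := by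
    intro x
    apply Measurable.aestronglyMeasurable
    fun_prop
  have hF'meas : AEStronglyMeasurable (F' r) ν := by
    apply Measurable.aestronglyMeasurable
    fun_prop
  set ε := r / 2 with hε
  have hεpos : 0 < ε := by positivity
  set a : ℝ := r ^ 2 / 8 with ha
  have hapos : 0 < a := by positivity
  set C : ℝ := (2 * Real.pi * (2 * r)) *
    (((k + 2).factorial : ℝ) / (2 * Real.pi * a) ^ (((k:ℝ) + 2) / 2)) with hC
  -- bound for F'
  have h_bound : ∀ᵐ s ∂ν, ∀ x ∈ Metric.ball r ε, ‖F' x s‖ ≤ C := by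
    filter_upwards [hmemae] with s hs x hx
    have hs0 : 0 < s := hs
    rw [Metric.mem_ball, Real.dist_eq, abs_lt] at hx
    have hx0 : 0 < x := by rw [hε] at hx; linarith [hx.1]
    have hx2 : x ≤ 2 * r := by rw [hε] at hx; linarith [hx.2]
    have hxr : a / s ≤ x ^ 2 / (2 * s) := by
      rw [ha, div_le_div_iff₀ (by positivity) (by positivity)]
      have hx4 : r / 2 ≤ x := by rw [hε] at hx; linarith [hx.1]
      have h5 : r ^ 2 / 4 ≤ x ^ 2 := by nlinarith
      nlinarith [mul_le_mul_of_nonneg_right h5 hs0.le]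
    have hexp : Real.exp (-(x ^ 2 / (2 * s))) ≤ Real.exp (-(a / s)) :=
      Real.exp_le_exp.mpr (by linarith)
    have key : (2 * Real.pi * s) ^ (-((k:ℝ) + 2) / 2) * Real.exp (-(x ^ 2 / (2 * s))) ≤
        ((k + 2).factorial : ℝ) / (2 * Real.pi * a) ^ (((k:ℝ) + 2) / 2) := by
      have h1 : (2 * Real.pi * s) ^ (-((k:ℝ) + 2) / 2) * Real.exp (-(x ^ 2 / (2 * s))) ≤
          (2 * Real.pi * s) ^ (-((k:ℝ) + 2) / 2) * Real.exp (-(a / s)) :=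
        mul_le_mul_of_nonneg_left hexp (by positivity)
      refine h1.trans ?_
      have hneg : -((k:ℝ) + 2) / 2 = -(((k:ℝ) + 2) / 2) := by ring
      rw [hneg]
      refine key_rpow_exp_bound a (((k:ℝ) + 2) / 2) hapos (by positivity) (k + 2) ?_ s hs0
      push_cast
      linarith [Nat.cast_nonneg (α := ℝ) k]
    have hkey0 : 0 ≤ (2 * Real.pi * s) ^ (-((k:ℝ) + 2) / 2) *
        Real.exp (-(x ^ 2 / (2 * s))) := by positivity
    show ‖-(2 * Real.pi * x) * ((2 * Real.pi * s) ^ (-((k : ℝ) + 2) / 2) *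
      Real.exp (-(x ^ 2 / (2 * s))))‖ ≤ C
    rw [Real.norm_eq_abs, abs_mul, abs_neg,
      abs_of_pos (by positivity : (0:ℝ) < 2 * Real.pi * x), abs_of_nonneg hkey0, hC]
    apply mul_le_mul _ key hkey0 (by positivity)
    nlinarith
  have hCint : Integrable (fun _ : ℝ => C) ν := integrable_const C
  -- integrability of F r
  have hFint : Integrable (F r) ν := by
    set D : ℝ := ((k : ℕ).factorial : ℝ) / (2 * Real.pi * (r ^ 2 / 2)) ^ ((k:ℝ) / 2) with hD
    refine (integrable_const D).mono' (hFmeas r) ?_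
    filter_upwards [hmemae] with s hs
    have hs0 : 0 < s := hs
    have h0 : 0 ≤ F r s := by rw [hF]; positivity
    rw [Real.norm_eq_abs, abs_of_nonneg h0, hD]
    have hneg : -(k:ℝ) / 2 = -((k:ℝ) / 2) := by ring
    have heq : r ^ 2 / (2 * s) = (r ^ 2 / 2) / s := by ring
    show (2 * Real.pi * s) ^ (-(k : ℝ) / 2) * Real.exp (-(r ^ 2 / (2 * s))) ≤ _
    rw [hneg, heq]
    refine key_rpow_exp_bound (r ^ 2 / 2) ((k:ℝ) / 2) (by positivity) (by positivity) k ?_ s hs0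
    linarith [Nat.cast_nonneg (α := ℝ) k]
  -- pointwise derivative
  have h_diff : ∀ᵐ s ∂ν, ∀ x ∈ Metric.ball r ε, HasDerivAt (fun y => F y s) (F' x s) x := by
    filter_upwards [hmemae] with s hs x _
    have hs0 : 0 < s := hs
    have hg : HasDerivAt (fun y : ℝ => -(y ^ 2 / (2 * s))) (-(x / s)) x := by
      have : HasDerivAt (fun y : ℝ => y ^ 2) (2 * x) x := by
        simpa using (hasDerivAt_pow 2 x)
      have h2 := (this.div_const (2 * s)).neg
      refine h2.congr_deriv ?_
      ring
    have hexp : HasDerivAt (fun y : ℝ => Real.exp (-(y ^ 2 / (2 * s))))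
        (Real.exp (-(x ^ 2 / (2 * s))) * (-(x / s))) x := hg.exp
    have hmul := hexp.const_mul ((2 * Real.pi * s) ^ (-(k : ℝ) / 2))
    refine hmul.congr_deriv ?_
    symm
    show -(2 * Real.pi * x) * ((2 * Real.pi * s) ^ (-((k : ℝ) + 2) / 2) *
        Real.exp (-(x ^ 2 / (2 * s)))) = _
    have hrpow : (2 * Real.pi * s) ^ (-((k:ℝ) + 2) / 2) =
        (2 * Real.pi * s) ^ (-(k:ℝ) / 2) * (2 * Real.pi * s)⁻¹ := by
      rw [← Real.rpow_neg_one (2 * Real.pi * s),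
        ← Real.rpow_add (by positivity : (0:ℝ) < 2 * Real.pi * s)]
      congr 1
      ring
    rw [hrpow]
    field_simp
  have := hasDerivAt_integral_of_dominated_loc_of_deriv_le (Metric.ball_mem_nhds r hεpos)
    (Filter.Eventually.of_forall hFmeas) hFint hF'meas h_bound hCint h_diff
  have hder := this.2
  have heq : ∫ s, F' r s ∂ν = -(2 * Real.pi * r) *
      ∫ s in Set.Ioi (0:ℝ), (2 * Real.pi * s) ^ (-((k : ℝ) + 2) / 2) *
        Real.exp (-(r ^ 2 / (2 * s))) ∂μ := by
    rw [hF', ← hν, integral_const_mul]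
  rw [heq] at hder
  exact hder
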